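/- For every q with 1 < q ≤ 2, the function h_q(t) = (1 - ((1+√(1-t))/2)^q - ((1-√(1-t))/2)^q)^{1/q} is concave on the interval [0,1]. -/

import Mathlib

noncomputable def h (q t : ℝ) : ℝ :=
  (1 - ((1 + Real.sqrt (1 - t)) / 2) ^ q - ((1 - Real.sqrt (1 - t)) / 2) ^ q) ^ (1 / q)

open Real Set


lemma hasDerivAt_v {p : ℝ} (x : ℝ) (hx : 0 < x) :
    HasDerivAt (fun y : ℝ => (p-1)*y^(p-2) + (2-p)*y^(p-1))
      ((p-1)*((p-2)*x^(p-2-1)) + (2-p)*((p-1)*x^(p-1-1))) x := by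
  exact (((Real.hasDerivAt_rpow_const (Or.inl hx.ne')).const_mul (p-1)).add
    ((Real.hasDerivAt_rpow_const (Or.inl hx.ne')).const_mul (2-p)))

lemma v_le_one {p : ℝ} (hp0 : 0 < p) (hp1 : p ≤ 1) {x : ℝ} (hx0 : 0 < x) (hx1 : x < 1) :
    (p-1)*x^(p-2) + (2-p)*x^(p-1) ≤ 1 := by
  set v : ℝ → ℝ := fun y => (p-1)*y^(p-2) + (2-p)*y^(p-1) with hv
  set v' : ℝ → ℝ := fun y => (p-1)*((p-2)*y^(p-2-1)) + (2-p)*((p-1)*y^(p-1-1)) with hv'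
  obtain ⟨d, hd, hde⟩ := exists_hasDerivAt_eq_slope v v' hx1
    (fun y hy => (hasDerivAt_v y (lt_of_lt_of_le hx0 hy.1)).continuousAt.continuousWithinAt)
    (fun y hy => hasDerivAt_v y (hx0.trans hy.1))
  have hd0 : 0 < d := hx0.trans hd.1
  have hd1 : d < 1 := hd.2
  have hnn : 0 ≤ v' d := by
    have h1 : (0:ℝ) < d^(p-2-1) := Real.rpow_pos_of_pos hd0 _
    have h2 : d^(p-1-1) = d^(p-2-1) * d := by
      rw [← Real.rpow_add_one hd0.ne']; ring_nf
    have h3 : v' d = (p-1)*(p-2)*(d^(p-2-1)*(1-d)) := by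
      simp only [hv', h2]; ring
    rw [h3]
    have : 0 ≤ (p-1)*(p-2) := mul_nonneg_of_nonpos_of_nonpos (by linarith) (by linarith)
    exact mul_nonneg this (mul_nonneg h1.le (by linarith))
  have hv1 : v 1 = 1 := by simp [hv]; ring
  have hvx : v x = (p-1)*x^(p-2) + (2-p)*x^(p-1) := rfl
  rw [hde] at hnn
  have h1x : 0 < 1 - x := by linarith
  have := (div_nonneg_iff.mp hnn)
  rcases this with ⟨h, _⟩ | ⟨_, h⟩
  · linarith
  · linarith

lemma hasDerivAt_u {p : ℝ} (x : ℝ) (hx : 0 < x) :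
    HasDerivAt (fun y : ℝ => p - p*y + p*y^(p-1) + (2-p)*y^p)
      (-p + p*((p-1)*x^(p-1-1)) + (2-p)*(p*x^(p-1))) x := by
  have h1 : HasDerivAt (fun y : ℝ => p - p*y) (-p) x := by
    simpa using ((hasDerivAt_id x).const_mul p).const_sub p
  have h2 : HasDerivAt (fun y : ℝ => p*y^(p-1)) (p*((p-1)*x^(p-1-1))) x :=
    (Real.hasDerivAt_rpow_const (Or.inl hx.ne')).const_mul p
  have h3 : HasDerivAt (fun y : ℝ => (2-p)*y^p) ((2-p)*(p*x^(p-1))) x :=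
    (Real.hasDerivAt_rpow_const (Or.inl hx.ne')).const_mul (2-p)
  exact (h1.add h2).add h3

lemma u_ge_two {p : ℝ} (hp0 : 0 < p) (hp1 : p ≤ 1) {r : ℝ} (hr0 : 0 < r) (hr1 : r < 1) :
    2 ≤ p - p*r + p*r^(p-1) + (2-p)*r^p := by
  set u : ℝ → ℝ := fun y => p - p*y + p*y^(p-1) + (2-p)*y^p with hu
  set u' : ℝ → ℝ := fun y => -p + p*((p-1)*y^(p-1-1)) + (2-p)*(p*y^(p-1)) with hu'
  obtain ⟨c, hc, hce⟩ := exists_hasDerivAt_eq_slope u u' hr1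
    (fun y hy => (hasDerivAt_u y (lt_of_lt_of_le hr0 hy.1)).continuousAt.continuousWithinAt)
    (fun y hy => hasDerivAt_u y (hr0.trans hy.1))
  have hc0 : 0 < c := hr0.trans hc.1
  have hc1 : c < 1 := hc.2
  have hup : 0 ≥ u' c := by
    have hv := v_le_one hp0 hp1 hc0 hc1
    have h2 : c^(p-1-1) = c^(p-2) := by rw [show p-1-1 = p-2 by ring]
    have h3 : u' c = p*(((p-1)*c^(p-2) + (2-p)*c^(p-1)) - 1) := by
      simp only [hu', h2]; ring
    rw [h3]
    have : ((p-1)*c^(p-2) + (2-p)*c^(p-1)) - 1 ≤ 0 := by linarith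
    exact mul_nonpos_of_nonneg_of_nonpos hp0.le this
  have hu1 : u 1 = 2 := by norm_num [hu]
  have hur : u r = p - p*r + p*r^(p-1) + (2-p)*r^p := rfl
  rw [hce] at hup
  have h1r : 0 < 1 - r := by linarith
  have := div_nonpos_iff.mp hup
  rcases this with ⟨_, h⟩ | ⟨h, _⟩
  · linarith
  · linarith

lemma trapezoid {p a b : ℝ} (hp0 : 0 < p) (hp1 : p ≤ 1) (hb : 0 < b) (hba : b < a) :
    2*(a^p - b^p) ≤ p*(a-b)*(a^(p-1) + b^(p-1)) := by
  have ha : 0 < a := hb.trans hba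
  have hr0 : 0 < b/a := div_pos hb ha
  have hr1 : b/a < 1 := (div_lt_one ha).2 hba
  have key := u_ge_two hp0 hp1 hr0 hr1
  rw [Real.div_rpow hb.le ha.le, Real.div_rpow hb.le ha.le] at key
  have hA : (0:ℝ) < a^p := Real.rpow_pos_of_pos ha _
  have hA' : (0:ℝ) < a^(p-1) := Real.rpow_pos_of_pos ha _
  have hB' : (0:ℝ) < b^(p-1) := Real.rpow_pos_of_pos hb _
  have ea : a^p = a^(p-1) * a := by rw [← Real.rpow_add_one ha.ne']; ring_nf
  have eb : b^p = b^(p-1) * b := by rw [← Real.rpow_add_one hb.ne']; ring_nf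
  have := mul_le_mul_of_nonneg_right key hA.le
  rw [ea, eb] at this ⊢
  have h1 : (p - p*(b/a) + p*(b^(p-1)/a^(p-1)) + (2-p)*(b^(p-1)*b/(a^(p-1)*a))) * (a^(p-1)*a)
      = p*(a^(p-1)*a) - p*b*a^(p-1) + p*b^(p-1)*a + (2-p)*(b^(p-1)*b) := by
    field_simp
  rw [h1] at this
  nlinarith [this]

noncomputable def phi (p s : ℝ) : ℝ := (((1+s)/2)^p - ((1-s)/2)^p)/s

lemma hasDerivAt_phi {p : ℝ} {s : ℝ} (hs0 : 0 < s) (hs1 : s < 1) :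
    HasDerivAt (phi p)
      (((p*((1+s)/2)^(p-1)*(1/2) - p*((1-s)/2)^(p-1)*(-1/2)) * s
        - (((1+s)/2)^p - ((1-s)/2)^p) * 1) / s^2) s := by
  have ha : (0:ℝ) < (1+s)/2 := by linarith
  have hb : (0:ℝ) < (1-s)/2 := by linarith
  have h1 : HasDerivAt (fun x : ℝ => (1+x)/2) (1/2) s := by
    simpa using ((hasDerivAt_id s).const_add 1).div_const 2
  have h2 : HasDerivAt (fun x : ℝ => (1-x)/2) (-1/2) s := by
    simpa using ((hasDerivAt_id s).const_sub 1).div_const 2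
  have h3 : HasDerivAt (fun x : ℝ => ((1+x)/2)^p) (p*((1+s)/2)^(p-1)*(1/2)) s := by
    simpa [mul_assoc, Function.comp_def] using (Real.hasDerivAt_rpow_const (p := p) (Or.inl ha.ne')).comp s h1
  have h4 : HasDerivAt (fun x : ℝ => ((1-x)/2)^p) (p*((1-s)/2)^(p-1)*(-1/2)) s := by
    simpa [mul_assoc, Function.comp_def] using (Real.hasDerivAt_rpow_const (p := p) (Or.inl hb.ne')).comp s h2
  exact (h3.sub h4).div (hasDerivAt_id s) hs0.ne'

lemma phi_mono {p : ℝ} (hp0 : 0 < p) (hp1 : p ≤ 1) {s₂ s₁ : ℝ}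
    (h0 : 0 < s₂) (h21 : s₂ < s₁) (h1 : s₁ < 1) : phi p s₂ ≤ phi p s₁ := by
  obtain ⟨c, hc, hce⟩ := exists_hasDerivAt_eq_slope (phi p) _ h21
    (fun y hy => (hasDerivAt_phi (lt_of_lt_of_le h0 hy.1)
        (lt_of_le_of_lt hy.2 h1)).continuousAt.continuousWithinAt)
    (fun y hy => hasDerivAt_phi (h0.trans hy.1) (hy.2.trans h1))
  have hc0 : 0 < c := h0.trans hc.1
  have hc1 : c < 1 := hc.2.trans h1
  have hbb : (0:ℝ) < (1-c)/2 := by linarith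
  have hba : (1-c)/2 < (1+c)/2 := by linarith
  have htrap := trapezoid hp0 hp1 hbb hba
  have hnum : 0 ≤ (p*((1+c)/2)^(p-1)*(1/2) - p*((1-c)/2)^(p-1)*(-1/2)) * c
      - (((1+c)/2)^p - ((1-c)/2)^p) * 1 := by
    have : (1+c)/2 - (1-c)/2 = c := by ring
    nlinarith [htrap]
  have hd : 0 ≤ ((p*((1+c)/2)^(p-1)*(1/2) - p*((1-c)/2)^(p-1)*(-1/2)) * c
      - (((1+c)/2)^p - ((1-c)/2)^p) * 1) / c^2 := div_nonneg hnum (by positivity)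
  rw [hce] at hd
  have := div_nonneg_iff.mp hd
  rcases this with ⟨h, _⟩ | ⟨_, h⟩
  · linarith
  · linarith

noncomputable def Faux (q t : ℝ) : ℝ :=
  1 - ((1 + Real.sqrt (1 - t)) / 2) ^ q - ((1 - Real.sqrt (1 - t)) / 2) ^ q

lemma hasDerivAt_Faux {q : ℝ} (hq1 : 1 < q) {t : ℝ} (ht0 : 0 < t) (ht1 : t < 1) :
    HasDerivAt (Faux q) (q/4 * phi (q-1) (Real.sqrt (1-t))) t := by
  set s := Real.sqrt (1-t) with hsdef
  have h1t : (0:ℝ) < 1 - t := by linarith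
  have hs0 : 0 < s := Real.sqrt_pos.2 h1t
  have hs1 : s < 1 := by
    have := Real.sqrt_lt_sqrt (by linarith) (show 1 - t < 1 by linarith)
    simpa using this
  have hsq : HasDerivAt (fun x : ℝ => Real.sqrt (1-x)) (1/(2*s) * (-1)) t := by
    have hinner : HasDerivAt (fun x : ℝ => 1 - x) (-1) t := by
      simpa using (hasDerivAt_id t).const_sub 1
    exact (Real.hasDerivAt_sqrt h1t.ne').comp t hinner
  have ha : (0:ℝ) < (1+s)/2 := by linarith
  have hb : (0:ℝ) < (1-s)/2 := by linarith
  have hA : HasDerivAt (fun x : ℝ => (1 + Real.sqrt (1-x))/2) (1/(2*s) * (-1) / 2) t :=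
    (hsq.const_add 1).div_const 2
  have hB : HasDerivAt (fun x : ℝ => (1 - Real.sqrt (1-x))/2) (-(1/(2*s) * (-1)) / 2) t :=
    (hsq.const_sub 1).div_const 2
  have hAq : HasDerivAt (fun x : ℝ => ((1 + Real.sqrt (1-x))/2)^q)
      (q * ((1+s)/2)^(q-1) * (1/(2*s) * (-1) / 2)) t := by
    simpa [mul_assoc, Function.comp_def] using (Real.hasDerivAt_rpow_const (p := q) (Or.inl ha.ne')).comp t hA
  have hBq : HasDerivAt (fun x : ℝ => ((1 - Real.sqrt (1-x))/2)^q)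
      (q * ((1-s)/2)^(q-1) * (-(1/(2*s) * (-1)) / 2)) t := by
    simpa [mul_assoc, Function.comp_def] using (Real.hasDerivAt_rpow_const (p := q) (Or.inl hb.ne')).comp t hB
  have hF : HasDerivAt (Faux q)
      (-(q * ((1+s)/2)^(q-1) * (1/(2*s) * (-1) / 2)) - q * ((1-s)/2)^(q-1) * (-(1/(2*s) * (-1)) / 2)) t := by
    have h := (hAq.const_sub 1).sub hBq
    have hfe : Faux q = fun x : ℝ =>
        (1 - ((1 + Real.sqrt (1-x))/2)^q) - ((1 - Real.sqrt (1-x))/2)^q := rfl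
    rw [hfe]
    exact h
  convert hF using 1
  unfold phi
  field_simp
  ring

lemma concaveF {q : ℝ} (hq1 : 1 < q) (hq2 : q ≤ 2) : ConcaveOn ℝ (Icc (0:ℝ) 1) (Faux q) := by
  have hq0 : (0:ℝ) < q := by linarith
  have hcont : ContinuousOn (Faux q) (Icc 0 1) := by
    intro t ht
    apply ContinuousAt.continuousWithinAt
    have hc1 : Continuous (fun x : ℝ => (1 + Real.sqrt (1-x))/2) := by
      continuity
    have hc2 : Continuous (fun x : ℝ => (1 - Real.sqrt (1-x))/2) := by
      continuity
    have h1 : ContinuousAt (fun x : ℝ => ((1 + Real.sqrt (1-x))/2)^q) t :=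
      (Real.continuousAt_rpow_const _ q (Or.inr hq0.le)).comp hc1.continuousAt
    have h2 : ContinuousAt (fun x : ℝ => ((1 - Real.sqrt (1-x))/2)^q) t :=
      (Real.continuousAt_rpow_const _ q (Or.inr hq0.le)).comp hc2.continuousAt
    exact (continuousAt_const.sub h1).sub h2
  have hderiv : ∀ t ∈ Ioo (0:ℝ) 1, HasDerivAt (Faux q) (q/4 * phi (q-1) (Real.sqrt (1-t))) t :=
    fun t ht => hasDerivAt_Faux hq1 ht.1 ht.2
  apply AntitoneOn.concaveOn_of_deriv (convex_Icc 0 1) hcont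
  · rw [interior_Icc]
    exact fun t ht => (hderiv t ht).differentiableAt.differentiableWithinAt
  · rw [interior_Icc]
    intro x hx y hy hxy
    rw [(hderiv x hx).deriv, (hderiv y hy).deriv]
    have hsx0 : 0 < Real.sqrt (1-x) := Real.sqrt_pos.2 (by linarith [hx.2])
    have hsx1 : Real.sqrt (1-x) < 1 := by
      have := Real.sqrt_lt_sqrt (by linarith [hx.2]) (show 1 - x < 1 by linarith [hx.1])
      simpa using this
    have hsy0 : 0 < Real.sqrt (1-y) := Real.sqrt_pos.2 (by linarith [hy.2])
    have hle : Real.sqrt (1-y) ≤ Real.sqrt (1-x) := Real.sqrt_le_sqrt (by linarith)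
    rcases eq_or_lt_of_le hle with heq | hlt
    · rw [heq]
    · have := phi_mono (p := q-1) (by linarith) (by linarith) hsy0 hlt hsx1
      have hq4 : (0:ℝ) ≤ q/4 := by linarith
      exact mul_le_mul_of_nonneg_left this hq4

lemma F_nonneg {q : ℝ} (hq1 : 1 ≤ q) {t : ℝ} (ht : t ∈ Icc (0:ℝ) 1) : 0 ≤ Faux q t := by
  obtain ⟨ht0, ht1⟩ := ht
  have h1t0 : (0:ℝ) ≤ 1 - t := by linarith
  set s := Real.sqrt (1-t) with hs
  have hs0 : 0 ≤ s := Real.sqrt_nonneg _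
  have hs1 : s ≤ 1 := Real.sqrt_le_one.mpr (by linarith)
  have ha : ((1+s)/2)^q ≤ (1+s)/2 := by
    have := Real.rpow_le_rpow_of_exponent_ge' (x := (1+s)/2) (by linarith) (by linarith)
      zero_le_one hq1
    simpa using this
  have hb : ((1-s)/2)^q ≤ (1-s)/2 := by
    have := Real.rpow_le_rpow_of_exponent_ge' (x := (1-s)/2) (by linarith) (by linarith)
      zero_le_one hq1
    simpa using this
  have : Faux q t = 1 - ((1+s)/2)^q - ((1-s)/2)^q := rfl
  rw [this]
  linarith

theorem h_concave (q : ℝ) (hq1 : 1 < q) (hq2 : q ≤ 2) :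
    ConcaveOn ℝ (Set.Icc (0:ℝ) 1) (h q) := by
  have hq0 : (0:ℝ) < q := by linarith
  have hcF := concaveF hq1 hq2
  have hinv0 : (0:ℝ) ≤ 1/q := by positivity
  have hinv1 : 1/q ≤ 1 := by
    rw [div_le_one hq0]; linarith
  have hrpow := Real.concaveOn_rpow hinv0 hinv1
  refine ⟨convex_Icc _ _, ?_⟩
  intro x hx y hy a b ha hb hab
  have hz : a • x + b • y ∈ Icc (0:ℝ) 1 := (convex_Icc (0:ℝ) 1) hx hy ha hb hab
  have hFx := F_nonneg hq1.le hx
  have hFy := F_nonneg hq1.le hy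
  have hhx : h q x = (Faux q x) ^ (1/q) := rfl
  have hhy : h q y = (Faux q y) ^ (1/q) := rfl
  have hhz : h q (a • x + b • y) = (Faux q (a • x + b • y)) ^ (1/q) := rfl
  rw [hhx, hhy, hhz]
  have step1 : a • (Faux q x) ^ (1/q) + b • (Faux q y) ^ (1/q)
      ≤ (a • Faux q x + b • Faux q y) ^ (1/q) :=
    hrpow.2 hFx hFy ha hb hab
  have step2 : (a • Faux q x + b • Faux q y) ^ (1/q) ≤ (Faux q (a • x + b • y)) ^ (1/q) := by
    apply Real.rpow_le_rpow
    · have : (0:ℝ) ≤ a * Faux q x + b * Faux q y := by positivity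
      simpa using this
    · exact hcF.2 hx hy ha hb hab
    · exact hinv0
  calc a • (Faux q x) ^ (1/q) + b • (Faux q y) ^ (1/q)
      ≤ (a • Faux q x + b • Faux q y) ^ (1/q) := step1
    _ ≤ (Faux q (a • x + b • y)) ^ (1/q) := step2
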